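/- Let φ : ℝ → ℝ be the odd function satisfying φ(0)=0 and φ'(s) = 1/√(1+2φ(s)²). Then for all t ≥ 0, (1/2)·φ(t)² ≤ φ(t)·φ'(t)·t ≤ φ(t)². -/

import Mathlib

open Real Set

/-- For the odd solution `φ` of `φ' = (1+2φ²)^{-1/2}`, `φ(0)=0`,
one has `(1/2) φ(t)² ≤ φ(t) φ'(t) t ≤ φ(t)²` for all `t ≥ 0`. -/
theorem stmt_3 (φ : ℝ → ℝ) (h0 : φ 0 = 0) (hodd : ∀ t : ℝ, φ (-t) = - φ t)
    (hode : ∀ s : ℝ, 0 ≤ s → HasDerivAt φ (1 / Real.sqrt (1 + 2 * (φ s) ^ 2)) s) :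
    ∀ t : ℝ, 0 ≤ t →
      (1 / 2) * (φ t) ^ 2 ≤ φ t * deriv φ t * t ∧ φ t * deriv φ t * t ≤ (φ t) ^ 2 := by
  have hq : ∀ y : ℝ, (0:ℝ) < Real.sqrt (1 + 2 * y ^ 2) := fun y =>
    Real.sqrt_pos.mpr (by positivity)
  have hcont : ContinuousOn φ (Ici 0) := fun s hs =>
    (hode s hs).continuousAt.continuousWithinAt
  have hmono : MonotoneOn φ (Ici 0) := by
    apply monotoneOn_of_deriv_nonneg (convex_Ici 0) hcont
    · intro x hx
      rw [interior_Ici] at hx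
      exact (hode x (le_of_lt hx)).differentiableAt.differentiableWithinAt
    · intro x hx
      rw [interior_Ici] at hx
      rw [(hode x hx.le).deriv]
      positivity
  have hnn : ∀ t : ℝ, 0 ≤ t → 0 ≤ φ t := fun t ht => by
    have := hmono (self_mem_Ici) (mem_Ici.mpr ht) ht
    rwa [h0] at this
  intro t ht
  rcases eq_or_lt_of_le ht with rfl | ht'
  · simp [h0]
  have hdt : deriv φ t = 1 / Real.sqrt (1 + 2 * (φ t) ^ 2) := (hode t ht).deriv
  set q : ℝ := Real.sqrt (1 + 2 * (φ t) ^ 2) with hqdef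
  have hqpos : 0 < q := hq _
  have hqsq : q ^ 2 = 1 + 2 * (φ t) ^ 2 := Real.sq_sqrt (by positivity)
  set c : ℝ := 1 / q with hc
  have hcpos : 0 < c := by positivity
  -- Upper bound: t * c ≤ φ t
  have hup : t * c ≤ φ t := by
    have hm : MonotoneOn (fun x => φ x - x * c) (Icc 0 t) := by
      apply monotoneOn_of_deriv_nonneg (convex_Icc 0 t)
      · exact (hcont.mono Icc_subset_Ici_self).sub
          (continuousOn_id.mul continuousOn_const)
      · intro x hx
        rw [interior_Icc] at hx
        exact ((hode x hx.1.le).sub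
          ((hasDerivAt_id x).mul_const c)).differentiableAt.differentiableWithinAt
      · intro x hx
        rw [interior_Icc] at hx
        have hdu : HasDerivAt (fun x => φ x - x * c)
            (1 / Real.sqrt (1 + 2 * (φ x) ^ 2) - 1 * c) x :=
          (hode x hx.1.le).sub ((hasDerivAt_id x).mul_const c)
        rw [hdu.deriv, one_mul, sub_nonneg, hc]
        apply one_div_le_one_div_of_le (hq _)
        apply Real.sqrt_le_sqrt
        have h1 : φ x ≤ φ t := hmono (mem_Ici.mpr hx.1.le) (mem_Ici.mpr ht) hx.2.le
        have h2 : 0 ≤ φ x := hnn x hx.1.le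
        nlinarith
    have h' := hm (left_mem_Icc.mpr ht) (right_mem_Icc.mpr ht) ht
    simp only [h0, zero_mul, sub_zero, zero_sub] at h'
    linarith
  -- Lower bound: φ t * q ≤ 2 * t
  have hlow : φ t * q ≤ 2 * t := by
    have hm : MonotoneOn (fun x => 2 * x - φ x * Real.sqrt (1 + 2 * (φ x) ^ 2)) (Ici 0) := by
      have hder : ∀ x : ℝ, 0 ≤ x → HasDerivAt
          (fun x => 2 * x - φ x * Real.sqrt (1 + 2 * (φ x) ^ 2))
          (2 * 1 - ((1 / Real.sqrt (1 + 2 * (φ x) ^ 2)) * Real.sqrt (1 + 2 * (φ x) ^ 2)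
            + φ x * ((2 * (2 * φ x ^ 1 * (1 / Real.sqrt (1 + 2 * (φ x) ^ 2))))
              / (2 * Real.sqrt (1 + 2 * (φ x) ^ 2))))) x := by
        intro x hx
        have h1 : HasDerivAt (fun y => 1 + 2 * (φ y) ^ 2)
            (2 * (2 * φ x ^ 1 * (1 / Real.sqrt (1 + 2 * (φ x) ^ 2)))) x :=
          (((hode x hx).pow 2).const_mul 2).const_add 1
        have h2 := h1.sqrt (by positivity)
        exact ((hasDerivAt_id x).const_mul 2).sub ((hode x hx).mul h2)
      apply monotoneOn_of_deriv_nonneg (convex_Ici 0)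
      · intro x hx
        exact ((hder x hx).continuousAt).continuousWithinAt
      · intro x hx
        rw [interior_Ici] at hx
        exact (hder x hx.le).differentiableAt.differentiableWithinAt
      · intro x hx
        rw [interior_Ici] at hx
        rw [(hder x hx.le).deriv]
        have hqx : 0 < Real.sqrt (1 + 2 * (φ x) ^ 2) := hq _
        have hqxsq : Real.sqrt (1 + 2 * (φ x) ^ 2) ^ 2 = 1 + 2 * (φ x) ^ 2 :=
          Real.sq_sqrt (by positivity)
        rw [sub_nonneg]
        have hne : Real.sqrt (1 + 2 * (φ x) ^ 2) ≠ 0 := hqx.ne'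
        field_simp
        nlinarith [hqxsq, hqx, sq_nonneg (φ x)]
    have h' := hm (self_mem_Ici) (mem_Ici.mpr ht) ht
    simp only [h0, zero_mul, mul_zero, sub_zero] at h'
    linarith [h']
  have hcq : c * q = 1 := by rw [hc]; field_simp
  have hφnn := hnn t ht
  rw [hdt]
  constructor
  · nlinarith [mul_le_mul_of_nonneg_left hlow (mul_nonneg hφnn hcpos.le)]
  · nlinarith [mul_le_mul_of_nonneg_left hup hφnn]
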